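/- Under the stated smoothness, strong convexity, minimizer, heterogeneity-bound and stochastic-gradient hypotheses, if 0 < α ≤ 1/L and θ⁺(ω) = θ − α·∑_{k∈Π} w_k G_k(ω), then ∫ ‖θ⁺(ω) − θ*‖² dP(ω) ≤ C4·‖θ − θ*‖² + C3, where C4 = 1 − μα + 2·(C1 − 1)·L²·α² and C3 = α·Ω + α²·(C2 + 2·(C1 − 1)·L²·Ω/μ). -/

import Mathlib

open Finset RealInnerProductSpace MeasureTheory
open scoped ENNReal NNReal

lemma wsum_sq_le {ι : Type*} [Fintype ι] (w a : ι → ℝ) (hw : ∀ k, 0 ≤ w k)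
    (hw1 : ∑ k, w k = 1) : (∑ k, w k * a k) ^ 2 ≤ ∑ k, w k * a k ^ 2 := by
  have h := Finset.sum_mul_sq_le_sq_mul_sq Finset.univ (fun k => Real.sqrt (w k))
      (fun k => Real.sqrt (w k) * a k)
  have e1 : ∀ k : ι, Real.sqrt (w k) * (Real.sqrt (w k) * a k) = w k * a k := by
    intro k; rw [← mul_assoc, Real.mul_self_sqrt (hw k)]
  have e2 : ∀ k : ι, Real.sqrt (w k) ^ 2 = w k := fun k => Real.sq_sqrt (hw k)
  have e3 : ∀ k : ι, (Real.sqrt (w k) * a k) ^ 2 = w k * a k ^ 2 := by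
    intro k; rw [mul_pow, e2]
  simp only [e1, e2, e3, hw1, one_mul] at h
  exact h

lemma grad_norm_sq_le {d : ℕ} (Fk : EuclideanSpace ℝ (Fin d) → ℝ)
    (gk : EuclideanSpace ℝ (Fin d) → EuclideanSpace ℝ (Fin d)) (L : ℝ) (hL : 0 < L)
    (hsm : ∀ x y, Fk x - Fk y ≤ ⟪gk y, x - y⟫ + (L / 2) * ‖x - y‖ ^ 2)
    (m : ℝ) (hm : ∀ x, m ≤ Fk x) (x : EuclideanSpace ℝ (Fin d)) :
    ‖gk x‖ ^ 2 ≤ 2 * L * (Fk x - m) := by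
  have h := hsm (x - (1 / L) • gk x) x
  have hx : x - (1 / L) • gk x - x = -((1 / L) • gk x) := by abel
  rw [hx] at h
  have e1 : ⟪gk x, -((1 / L) • gk x)⟫ = -(1 / L) * ‖gk x‖ ^ 2 := by
    rw [inner_neg_right, real_inner_smul_right, real_inner_self_eq_norm_sq]; ring
  have e2 : ‖-((1 / L) • gk x)‖ ^ 2 = (1 / L) ^ 2 * ‖gk x‖ ^ 2 := by
    rw [norm_neg, norm_smul, mul_pow, Real.norm_eq_abs, sq_abs]
  rw [e1, e2] at h
  have hm' := hm (x - (1 / L) • gk x)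
  have hL' : L ≠ 0 := ne_of_gt hL
  have : Fk (x - (1/L) • gk x) ≤ Fk x - (1/(2*L)) * ‖gk x‖ ^ 2 := by
    have : -(1/L) * ‖gk x‖^2 + L/2 * ((1/L)^2 * ‖gk x‖^2) = -(1/(2*L)) * ‖gk x‖^2 := by
      field_simp; ring
    linarith [h, this.le]
  have h3 : (1/(2*L)) * ‖gk x‖ ^ 2 ≤ Fk x - m := by linarith [le_trans hm' this]
  calc ‖gk x‖ ^ 2 = 2 * L * ((1/(2*L)) * ‖gk x‖ ^ 2) := by field_simp
    _ ≤ 2 * L * (Fk x - m) := by apply mul_le_mul_of_nonneg_left h3; positivity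

lemma amgm_bound (T nc L Om A J : ℝ) (hL : 0 < L) (hT0 : 0 ≤ T) (hnc : 0 ≤ nc)
    (hT2 : T ^ 2 ≤ L * Om) (hA : nc ^ 2 = A) (hJT : J ≤ T * nc) :
    J ≤ Om / 2 + L / 2 * A := by
  have h1 : 0 ≤ (T - L * nc) ^ 2 := sq_nonneg _
  have h2 : T * nc * (2 * L) ≤ L * Om + L ^ 2 * nc ^ 2 := by nlinarith [h1]
  have h3 : T * nc ≤ (L * Om + L ^ 2 * nc ^ 2) / (2 * L) := by
    rw [le_div_iff₀ (by positivity : (0:ℝ) < 2 * L)]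
    linarith
  have e : (L * Om + L ^ 2 * nc ^ 2) / (2 * L) = Om / 2 + L / 2 * nc ^ 2 := by
    field_simp
  rw [e] at h3
  rw [← hA]
  linarith

theorem per_iteration_contraction
    (d : ℕ) (hd : 0 < d)
    (ι : Type*) [Fintype ι]
    (w : ι → ℝ) (hw : ∀ k, 0 ≤ w k) (hw1 : ∑ k, w k = 1)
    (F : ι → EuclideanSpace ℝ (Fin d) → ℝ)
    (gradF : ι → EuclideanSpace ℝ (Fin d) → EuclideanSpace ℝ (Fin d))
    (hdiff : ∀ k x, HasGradientAt (F k) (gradF k x) x)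
    (L μ : ℝ) (hμ : 0 < μ) (hLμ : μ ≤ L)
    (hsmooth : ∀ k, ∀ x y : EuclideanSpace ℝ (Fin d),
      F k x - F k y ≤ ⟪gradF k y, x - y⟫ + (L / 2) * ‖x - y‖ ^ 2)
    (hstrong : ∀ k, ∀ x y : EuclideanSpace ℝ (Fin d),
      F k x - F k y ≥ ⟪gradF k y, x - y⟫ + (μ / 2) * ‖x - y‖ ^ 2)
    (θmin : ι → EuclideanSpace ℝ (Fin d)) (Fkstar : ι → ℝ)
    (hmin : ∀ k, F k (θmin k) = Fkstar k)
    (hminle : ∀ k, ∀ x, Fkstar k ≤ F k x)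
    (θstar : EuclideanSpace ℝ (Fin d)) (Fstar : ℝ)
    (φ1 φ2 : ℝ) (hφ1 : 0 ≤ φ1) (hφ2 : 0 ≤ φ2)
    (hhet1 : |Fstar - ∑ k, w k * Fkstar k| ≤ φ1)
    (hhet2 : |Fstar - ∑ k, w k * F k θstar| ≤ φ2)
    (Ω : ℝ) (hΩ : Ω = 2 * (φ1 + φ2))
    (θ : EuclideanSpace ℝ (Fin d))
    (ΩP : Type*) [MeasurableSpace ΩP] (P : Measure ΩP) [IsProbabilityMeasure P]
    (G : ι → ΩP → EuclideanSpace ℝ (Fin d))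
    (hG2 : ∀ k, MemLp (G k) 2 P)
    (hunbiased : ∀ k, ∫ ω, G k ω ∂P = gradF k θ)
    (C1 C2 : ℝ) (hC1 : 1 ≤ C1) (hC2 : 0 ≤ C2)
    (hmoment : ∀ k, ∫ ω, ‖G k ω‖ ^ 2 ∂P ≤ C1 * ‖gradF k θ‖ ^ 2 + C2)
    (α : ℝ) (hα0 : 0 < α) (hα : α ≤ 1 / L)
    (θplus : ΩP → EuclideanSpace ℝ (Fin d))
    (hθplus : ∀ ω, θplus ω = θ - α • ∑ k, w k • G k ω) :
    ∫ ω, ‖θplus ω - θstar‖ ^ 2 ∂P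
      ≤ (1 - μ * α + 2 * (C1 - 1) * L ^ 2 * α ^ 2) * ‖θ - θstar‖ ^ 2
        + (α * Ω + α ^ 2 * (C2 + 2 * (C1 - 1) * L ^ 2 * Ω / μ)) := by
  have hL : 0 < L := lt_of_lt_of_le hμ hLμ
  set c : EuclideanSpace ℝ (Fin d) := θ - θstar with hc
  set g : ΩP → EuclideanSpace ℝ (Fin d) := fun ω => ∑ k, w k • G k ω with hg
  set A : ℝ := ‖θ - θstar‖ ^ 2 with hA
  have hA0 : 0 ≤ A := sq_nonneg _
  -- real quantities
  set Fθ : ℝ := ∑ k, w k * F k θ with hFθ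
  set Fs : ℝ := ∑ k, w k * F k θstar with hFs
  set Fm : ℝ := ∑ k, w k * Fkstar k with hFm
  set S : ℝ := ∑ k, w k * ‖gradF k θ‖ ^ 2 with hS
  -- Memℒp and integrability facts
  have hGk_int : ∀ k : ι, Integrable (G k) P := fun k => (hG2 k).integrable one_le_two
  have hgmem : MemLp g 2 P := by
    have := memLp_finset_sum (μ := P) (f := fun k ω => w k • G k ω) Finset.univ
      (fun k _ => (hG2 k).const_smul (w k))
    simpa using this
  have hgint : Integrable g P := hgmem.integrable one_le_two
  have hgsqint : Integrable (fun ω => ‖g ω‖ ^ 2) P := by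
    have h := hgmem.integrable_norm_rpow two_ne_zero ENNReal.ofNat_ne_top
    have : (2 : ℝ≥0∞).toReal = (2 : ℝ) := by simp
    rw [this] at h
    simpa [Real.rpow_two] using h
  have hGksqint : ∀ k : ι, Integrable (fun ω => ‖G k ω‖ ^ 2) P := by
    intro k
    have h := (hG2 k).integrable_norm_rpow two_ne_zero ENNReal.ofNat_ne_top
    have : (2 : ℝ≥0∞).toReal = (2 : ℝ) := by simp
    rw [this] at h
    simpa [Real.rpow_two] using h
  have hinner_int : Integrable (fun ω => ⟪c, g ω⟫) P :=
    (innerSL ℝ c).integrable_comp hgint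
  -- mean of g
  have hgmean : ∫ ω, g ω ∂P = ∑ k, w k • gradF k θ := by
    have h1 : ∫ ω, g ω ∂P = ∑ k, ∫ ω, w k • G k ω ∂P := by
      exact integral_finset_sum _ (fun k _ => (hGk_int k).smul (w k))
    rw [h1]
    congr 1; ext k
    rw [integral_smul, hunbiased k]
  -- pointwise expansion
  have hpt : ∀ ω, ‖θplus ω - θstar‖ ^ 2 = A - 2 * α * ⟪c, g ω⟫ + α ^ 2 * ‖g ω‖ ^ 2 := by
    intro ω
    have h1 : θplus ω - θstar = c - α • g ω := by rw [hθplus ω, hc, hg]; abel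
    rw [h1, norm_sub_sq_real, real_inner_smul_right, norm_smul, mul_pow, Real.norm_eq_abs,
      sq_abs, hA]
    ring
  -- integral expansion
  have hexp : ∫ ω, ‖θplus ω - θstar‖ ^ 2 ∂P
      = A - 2 * α * ⟪c, ∑ k, w k • gradF k θ⟫ + α ^ 2 * ∫ ω, ‖g ω‖ ^ 2 ∂P := by
    rw [integral_congr_ae (ae_of_all _ hpt)]
    have i1 : Integrable (fun ω => A - 2 * α * ⟪c, g ω⟫) P := by
      exact (integrable_const A).sub (hinner_int.const_mul (2 * α))
    have i2 : Integrable (fun ω => α ^ 2 * ‖g ω‖ ^ 2) P := hgsqint.const_mul (α ^ 2)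
    have i3 : Integrable (fun ω => 2 * α * ⟪c, g ω⟫) P := hinner_int.const_mul (2 * α)
    rw [integral_add i1 i2, integral_sub (integrable_const A) i3,
      integral_const, integral_const_mul, integral_const_mul]
    have : ∫ ω, ⟪c, g ω⟫ ∂P = ⟪c, ∫ ω, g ω ∂P⟫ := by
      have := ((innerSL ℝ c).integral_comp_comm hgint)
      simpa using this
    rw [this, hgmean]
    simp [measure_univ]
  -- second moment bound
  have hsecond : ∫ ω, ‖g ω‖ ^ 2 ∂P ≤ C1 * S + C2 := by
    have hpw : ∀ ω, ‖g ω‖ ^ 2 ≤ ∑ k, w k * ‖G k ω‖ ^ 2 := by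
      intro ω
      have h1 : ‖g ω‖ ≤ ∑ k, w k * ‖G k ω‖ := by
        refine le_trans (norm_sum_le _ _) (le_of_eq ?_)
        congr 1; ext k
        rw [norm_smul, Real.norm_eq_abs, abs_of_nonneg (hw k)]
      have h2 : ‖g ω‖ ^ 2 ≤ (∑ k, w k * ‖G k ω‖) ^ 2 := by
        apply sq_le_sq' _ h1
        have : (0:ℝ) ≤ ∑ k, w k * ‖G k ω‖ :=
          Finset.sum_nonneg fun k _ => mul_nonneg (hw k) (norm_nonneg _)
        linarith [norm_nonneg (g ω)]
      exact le_trans h2 (wsum_sq_le w (fun k => ‖G k ω‖) hw hw1)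
    have hint : Integrable (fun ω => ∑ k, w k * ‖G k ω‖ ^ 2) P :=
      integrable_finset_sum _ (fun k _ => (hGksqint k).const_mul (w k))
    calc ∫ ω, ‖g ω‖ ^ 2 ∂P ≤ ∫ ω, ∑ k, w k * ‖G k ω‖ ^ 2 ∂P :=
          integral_mono hgsqint hint hpw
      _ = ∑ k, w k * ∫ ω, ‖G k ω‖ ^ 2 ∂P := by
          rw [integral_finset_sum _ (fun k _ => (hGksqint k).const_mul (w k))]
          congr 1; ext k; rw [integral_const_mul]
      _ ≤ ∑ k, w k * (C1 * ‖gradF k θ‖ ^ 2 + C2) :=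
          Finset.sum_le_sum fun k _ => mul_le_mul_of_nonneg_left (hmoment k) (hw k)
      _ = C1 * S + C2 := by
          have e : ∑ k, w k * (C1 * ‖gradF k θ‖ ^ 2 + C2)
              = C1 * (∑ k, w k * ‖gradF k θ‖ ^ 2) + C2 * (∑ k, w k) := by
            rw [Finset.mul_sum, Finset.mul_sum, ← Finset.sum_add_distrib]
            congr 1; ext k; ring
          rw [e, hw1, mul_one, hS]
  -- weighted sum tools
  have wsum_le : ∀ (a b : ι → ℝ), (∀ k, a k ≤ b k) →
      ∑ k, w k * a k ≤ ∑ k, w k * b k := fun a b h =>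
    Finset.sum_le_sum fun k _ => mul_le_mul_of_nonneg_left (h k) (hw k)
  have hinner_sum : ∀ (v : ι → EuclideanSpace ℝ (Fin d)),
      ⟪c, ∑ k, w k • v k⟫ = ∑ k, w k * ⟪v k, c⟫ := by
    intro v
    rw [inner_sum]
    refine Finset.sum_congr rfl fun k _ => ?_
    rw [real_inner_smul_right, real_inner_comm]
  have hcA : ‖c‖ ^ 2 = A := by rw [hc, hA]
  -- strong convexity aggregated
  have hsc : Fθ - Fs + μ / 2 * A ≤ ⟪c, ∑ k, w k • gradF k θ⟫ := by
    have hper : ∀ k, F k θ - F k θstar + μ / 2 * A ≤ ⟪gradF k θ, c⟫ := by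
      intro k
      have h := hstrong k θstar θ
      have e1 : ⟪gradF k θ, θstar - θ⟫ = -⟪gradF k θ, c⟫ := by
        rw [hc, ← inner_neg_right]; congr 1; abel
      have e2 : ‖θstar - θ‖ ^ 2 = A := by rw [norm_sub_rev, hA]
      rw [e1, e2] at h
      linarith
    rw [hinner_sum]
    have heq : ∑ k, w k * (F k θ - F k θstar + μ / 2 * A)
        = Fθ - Fs + μ / 2 * A := by
      simp only [mul_sub, mul_add]
      rw [Finset.sum_add_distrib, Finset.sum_sub_distrib, ← Finset.sum_mul, hw1, hFθ, hFs]
      ring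
    rw [← heq]
    exact wsum_le _ _ hper
  -- gradient-sum bounds via smoothness
  have hS2 : S ≤ 2 * L * (Fθ - Fm) := by
    have h := wsum_le (fun k => ‖gradF k θ‖ ^ 2) (fun k => 2 * L * (F k θ - Fkstar k))
      (fun k => grad_norm_sq_le (F k) (gradF k) L hL (hsmooth k) (Fkstar k) (hminle k) θ)
    rw [hS]
    refine le_trans h (le_of_eq ?_)
    rw [hFθ, hFm, mul_sub, Finset.mul_sum, Finset.mul_sum, ← Finset.sum_sub_distrib]
    exact Finset.sum_congr rfl fun k _ => by ring
  set T : ℝ := ∑ k, w k * ‖gradF k θstar‖ with hT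
  have hT0 : 0 ≤ T := Finset.sum_nonneg fun k _ => mul_nonneg (hw k) (norm_nonneg _)
  have hTsq : T ^ 2 ≤ 2 * L * (Fs - Fm) := by
    have h1 : T ^ 2 ≤ ∑ k, w k * ‖gradF k θstar‖ ^ 2 :=
      wsum_sq_le w (fun k => ‖gradF k θstar‖) hw hw1
    have h2 : ∑ k, w k * ‖gradF k θstar‖ ^ 2 ≤ 2 * L * (Fs - Fm) := by
      have h := wsum_le (fun k => ‖gradF k θstar‖ ^ 2) (fun k => 2 * L * (F k θstar - Fkstar k))
        (fun k => grad_norm_sq_le (F k) (gradF k) L hL (hsmooth k) (Fkstar k) (hminle k) θstar)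
      refine le_trans h (le_of_eq ?_)
      rw [hFs, hFm, mul_sub, Finset.mul_sum, Finset.mul_sum, ← Finset.sum_sub_distrib]
      exact Finset.sum_congr rfl fun k _ => by ring
    exact le_trans h1 h2
  -- heterogeneity bounds
  have hab1 := abs_le.mp hhet1
  have hab2 := abs_le.mp hhet2
  have hFsm : Fs - Fm ≤ φ1 + φ2 := by linarith [hab1.2, hab2.1]
  have hM0 : Fm ≤ Fθ := by
    rw [hFm, hFθ]
    exact wsum_le _ _ fun k => hminle k θ
  have hΩ0 : 0 ≤ Ω := by rw [hΩ]; linarith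
  -- smoothness aggregated at θstar
  set J : ℝ := ⟪c, ∑ k, w k • gradF k θstar⟫ with hJ
  have hsm_agg : Fθ - Fs ≤ J + L / 2 * A := by
    have hper : ∀ k, F k θ - F k θstar ≤ ⟪gradF k θstar, c⟫ + L / 2 * A := by
      intro k
      have h := hsmooth k θ θstar
      rw [← hc, hcA] at h
      exact h
    rw [hJ, hinner_sum]
    have heq : ∑ k, w k * (⟪gradF k θstar, c⟫ + L / 2 * A)
        = (∑ k, w k * ⟪gradF k θstar, c⟫) + L / 2 * A := by
      simp only [mul_add]
      rw [Finset.sum_add_distrib, ← Finset.sum_mul, hw1]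
      ring
    have h := wsum_le (fun k => F k θ - F k θstar) (fun k => ⟪gradF k θstar, c⟫ + L / 2 * A) hper
    rw [heq] at h
    refine le_trans (le_of_eq ?_) h
    simp only [mul_sub]
    rw [Finset.sum_sub_distrib, hFθ, hFs]
  -- bound on J
  have hJT : J ≤ T * ‖c‖ := by
    rw [hJ, hinner_sum, hT, Finset.sum_mul]
    refine Finset.sum_le_sum fun k _ => ?_
    rw [mul_assoc]
    exact mul_le_mul_of_nonneg_left (real_inner_le_norm _ _) (hw k)
  have hJb : J ≤ Ω / 2 + L / 2 * A := by
    have hT2 : T ^ 2 ≤ L * Ω := by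
      have h5 : 2 * L * (Fs - Fm) ≤ 2 * L * (φ1 + φ2) := by
        apply mul_le_mul_of_nonneg_left hFsm; positivity
      have e : L * Ω = 2 * L * (φ1 + φ2) := by rw [hΩ]; ring
      linarith [hTsq, h5, e.le, e.ge]
    exact amgm_bound T ‖c‖ L Ω A J hL hT0 (norm_nonneg c) hT2 hcA hJT
  -- assemble
  have hMnn : 0 ≤ Fθ - Fm := by linarith
  have hMD : Fθ - Fm ≤ (Fθ - Fs) + Ω / 2 := by rw [hΩ]; linarith
  have hΩμ : Ω ≤ L * Ω / μ := by
    rw [le_div_iff₀ hμ]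
    have := mul_le_mul_of_nonneg_left hLμ hΩ0
    linarith
  have hML : Fθ - Fm ≤ L * Ω / μ + L * A := by
    have h6 : Fθ - Fm ≤ Ω + L * A := by linarith [hJb, hsm_agg]
    linarith
  have hLα : L * α ≤ 1 := by
    rw [le_div_iff₀ hL] at hα; linarith
  -- final chain
  have step1 : ∫ ω, ‖θplus ω - θstar‖ ^ 2 ∂P
      ≤ A - 2 * α * (Fθ - Fs + μ / 2 * A) + α ^ 2 * (C1 * (2 * L * (Fθ - Fm)) + C2) := by
    rw [hexp]
    have h1 : 2 * α * (Fθ - Fs + μ / 2 * A) ≤ 2 * α * ⟪c, ∑ k, w k • gradF k θ⟫ :=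
      mul_le_mul_of_nonneg_left hsc (by positivity)
    have hx : C1 * S ≤ C1 * (2 * L * (Fθ - Fm)) :=
      mul_le_mul_of_nonneg_left hS2 (by linarith)
    have h2 : α ^ 2 * (∫ ω, ‖g ω‖ ^ 2 ∂P) ≤ α ^ 2 * (C1 * (2 * L * (Fθ - Fm)) + C2) :=
      mul_le_mul_of_nonneg_left (by linarith [hsecond]) (sq_nonneg α)
    linarith
  have h31 : 2 * L * α ^ 2 * (Fθ - Fm) ≤ 2 * α * (Fθ - Fm) := by
    have h0 : 0 ≤ α * (Fθ - Fm) * (1 - L * α) :=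
      mul_nonneg (mul_nonneg hα0.le hMnn) (by linarith)
    linarith [h0]
  have h32 : 2 * (C1 - 1) * L * α ^ 2 * (Fθ - Fm)
      ≤ 2 * (C1 - 1) * L * α ^ 2 * (L * Ω / μ + L * A) := by
    apply mul_le_mul_of_nonneg_left hML
    have h7 : (0:ℝ) ≤ C1 - 1 := by linarith
    positivity
  have h4 : 2 * α * (Fθ - Fm) ≤ 2 * α * (Fθ - Fs) + α * Ω := by
    have h := mul_le_mul_of_nonneg_left hMD (by positivity : (0:ℝ) ≤ 2 * α)
    have e : 2 * α * ((Fθ - Fs) + Ω / 2) = 2 * α * (Fθ - Fs) + α * Ω := by ring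
    linarith [h, e.le]
  have key1 : α ^ 2 * (C1 * (2 * L * (Fθ - Fm)) + C2)
      = 2 * L * α ^ 2 * (Fθ - Fm) + 2 * (C1 - 1) * L * α ^ 2 * (Fθ - Fm) + α ^ 2 * C2 := by
    ring
  have key2 : 2 * (C1 - 1) * L * α ^ 2 * (L * Ω / μ + L * A)
      = α ^ 2 * (2 * (C1 - 1) * L ^ 2 * Ω / μ) + 2 * (C1 - 1) * L ^ 2 * α ^ 2 * A := by
    field_simp
  have key3 : (1 - μ * α + 2 * (C1 - 1) * L ^ 2 * α ^ 2) * A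
        + (α * Ω + α ^ 2 * (C2 + 2 * (C1 - 1) * L ^ 2 * Ω / μ))
      = A - 2 * α * (Fθ - Fs + μ / 2 * A)
        + (2 * α * (Fθ - Fs) + α * Ω)
        + α ^ 2 * (2 * (C1 - 1) * L ^ 2 * Ω / μ) + 2 * (C1 - 1) * L ^ 2 * α ^ 2 * A
        + α ^ 2 * C2 := by ring
  linarith [step1, h31, h32, h4, key1.le, key1.ge, key2.le, key2.ge, key3.le, key3.ge]
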